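/- Let the cost be 𝒥(A) = ∫₀ᵀ∫_ℝ ψ̃(x,t, u^A_x(x,t)) dx dt + ∫₀ᵀ f(A(t)) dt with ψ̃ measurable, bounded, compactly supported and continuous in its last variable, and f : [A₀,0] → ℝ nondecreasing. Then any minimizer Ā of 𝒥 which additionally minimizes ∫₀ᵀ A(t) dt among all minimizers of 𝒥 satisfies Ā(t) = A₀ for a.e. t in the set { t ∈ [0,T] : u^Ā(0,t) = u^{A₀}(0,t) }. -/

import Mathlib

open MeasureTheory Set Filter

noncomputable section

/-- An `H¹` path on the time interval `[0, t]`: an absolutely continuous function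
whose a.e. derivative is square integrable on `(0, t)`. -/
structure H1Path (t : ℝ) where
  toFun : ℝ → ℝ
  deriv : ℝ → ℝ
  deriv_memL2 : MemLp deriv 2 (volume.restrict (Ioc 0 t))
  self_eq_integral : ∀ s ∈ Icc (0:ℝ) t, toFun s = toFun 0 + ∫ r in (0:ℝ)..s, deriv r

/-- The Lagrangian `L(α) = sup_{p ∈ [-R,0]} (α p - H p)`. -/
def lagrangian (R : ℝ) (H : ℝ → ℝ) (α : ℝ) : ℝ :=
  sSup ((fun p => α * p - H p) '' Icc (-R) 0)

/-- The cost `J^A(γ)` of a path `γ` on `[0, t]`. -/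
def pathCost (LL LR u0 A : ℝ → ℝ) (t : ℝ) (γ : H1Path t) : ℝ :=
  (∫ s in (0:ℝ)..t,
      if 0 < γ.toFun s then LR (γ.deriv s)
      else if γ.toFun s < 0 then LL (γ.deriv s)
      else - A s) + u0 (γ.toFun 0)

/-- The value function `u^A(x,t)`. -/
def valueFun (LL LR u0 A : ℝ → ℝ) (x t : ℝ) : ℝ :=
  sInf {c : ℝ | ∃ γ : H1Path t, γ.toFun t = x ∧ pathCost LL LR u0 A t γ = c}

/-- A path is optimal for `u^A(x,t)` if it attains the infimum. -/
def IsOptimal (LL LR u0 A : ℝ → ℝ) (x t : ℝ) (γ : H1Path t) : Prop :=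
  γ.toFun t = x ∧ pathCost LL LR u0 A t γ = valueFun LL LR u0 A x t

/-- Admissible controls: measurable with values in `[A₀, 0]`. -/
def Admissible (A0 : ℝ) (A : ℝ → ℝ) : Prop :=
  Measurable A ∧ ∀ s, A s ∈ Icc A0 0

/-- The flux cost functional `𝒥(A) = ∫₀ᵀ ∫_ℝ φ(x,t) u^A(x,t) dx dt`. -/
def fluxCost (T : ℝ) (LL LR u0 : ℝ → ℝ) (φ : ℝ → ℝ → ℝ) (A : ℝ → ℝ) : ℝ :=
  ∫ t in Ioc (0:ℝ) T, ∫ x : ℝ, φ x t * valueFun LL LR u0 A x t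

/-- The cost functional `𝒥(A) = ∫₀ᵀ ∫_ℝ φ u^A + ∫₀ᵀ f(A)`. -/
def costJ (T : ℝ) (LL LR u0 : ℝ → ℝ) (φ : ℝ → ℝ → ℝ) (f : ℝ → ℝ) (A : ℝ → ℝ) : ℝ :=
  (∫ t in Ioc (0:ℝ) T, ∫ x : ℝ, φ x t * valueFun LL LR u0 A x t)
    + ∫ t in Ioc (0:ℝ) T, f (A t)

/-- The set `𝒜` of minimizers of the flux cost. -/
def MinA (T A0 : ℝ) (LL LR u0 : ℝ → ℝ) (φ : ℝ → ℝ → ℝ) (A : ℝ → ℝ) : Prop :=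
  Admissible A0 A ∧ ∀ B : ℝ → ℝ, Admissible A0 B →
    fluxCost T LL LR u0 φ A ≤ fluxCost T LL LR u0 φ B

/-- The set `𝒜₁` of minimizers of `∫₀ᵀ A` among elements of `𝒜`. -/
def MinA1 (T A0 : ℝ) (LL LR u0 : ℝ → ℝ) (φ : ℝ → ℝ → ℝ) (A : ℝ → ℝ) : Prop :=
  MinA T A0 LL LR u0 φ A ∧ ∀ B : ℝ → ℝ, MinA T A0 LL LR u0 φ B →
    ∫ s in Ioc (0:ℝ) T, A s ≤ ∫ s in Ioc (0:ℝ) T, B s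

/-- The set `𝒜₂` of minimizers of `∫₀ᵀ s A(s) ds` among elements of `𝒜₁`. -/
def MinA2 (T A0 : ℝ) (LL LR u0 : ℝ → ℝ) (φ : ℝ → ℝ → ℝ) (A : ℝ → ℝ) : Prop :=
  MinA1 T A0 LL LR u0 φ A ∧ ∀ B : ℝ → ℝ, MinA1 T A0 LL LR u0 φ B →
    ∫ s in Ioc (0:ℝ) T, s * A s ≤ ∫ s in Ioc (0:ℝ) T, s * B s

/-- The interval with endpoints `a < b` is a connected component of `S ⊆ ℝ`. -/
def IsConnComp (S : Set ℝ) (a b : ℝ) : Prop :=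
  a < b ∧ ∃ t ∈ S, Ioo a b ⊆ connectedComponentIn S t ∧ connectedComponentIn S t ⊆ Icc a b

/-! ### Lagrangian lemmas -/

section Lagrangian

variable {R C0 : ℝ} {H : ℝ → ℝ}

lemma lagrangian_bddAbove (hR : 0 < R) (hH : ContinuousOn H (Icc (-R) 0)) (α : ℝ) :
    BddAbove ((fun p => α * p - H p) '' Icc (-R) 0) := by
  have hc : ContinuousOn (fun p => α * p - H p) (Icc (-R) 0) :=
    (continuousOn_const.mul continuousOn_id).sub hH
  exact ((isCompact_Icc.image_of_continuousOn hc)).bddAbove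

lemma lagrangian_nonneg (hR : 0 < R) (hH : ContinuousOn H (Icc (-R) 0)) (hH0 : H 0 = 0)
    (α : ℝ) : 0 ≤ lagrangian R H α := by
  have h0 : (0:ℝ) ∈ Icc (-R) 0 := ⟨by linarith, le_refl 0⟩
  have : α * 0 - H 0 ∈ (fun p => α * p - H p) '' Icc (-R) 0 := mem_image_of_mem _ h0
  have h := le_csSup (lagrangian_bddAbove hR hH α) this
  simpa [hH0, lagrangian] using h

lemma lagrangian_ge (hR : 0 < R) (hH : ContinuousOn H (Icc (-R) 0)) (hHR : H (-R) = 0)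
    (α : ℝ) : -R * α ≤ lagrangian R H α := by
  have h0 : (-R:ℝ) ∈ Icc (-R) 0 := ⟨le_refl _, by linarith⟩
  have : α * (-R) - H (-R) ∈ (fun p => α * p - H p) '' Icc (-R) 0 := mem_image_of_mem _ h0
  have h := le_csSup (lagrangian_bddAbove hR hH α) this
  rw [hHR] at h
  calc -R * α = α * (-R) - 0 := by ring
  _ ≤ _ := h

lemma lagrangian_le (hR : 0 < R) (hH : ContinuousOn H (Icc (-R) 0))
    (hC0 : ∀ p ∈ Icc (-R) 0, -H p ≤ C0) (α : ℝ) :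
    lagrangian R H α ≤ R * |α| + C0 := by
  apply csSup_le
  · exact (nonempty_Icc.2 (by linarith)).image _
  · rintro y ⟨p, hp, rfl⟩
    have h1 : α * p ≤ R * |α| := by
      have : |α * p| ≤ |α| * R := by
        rw [abs_mul]
        have : |p| ≤ R := by
          rw [abs_le]; constructor <;> [linarith [hp.1]; linarith [hp.2, hR.le]]
        nlinarith [abs_nonneg α]
      nlinarith [le_abs_self (α * p), abs_nonneg α]
    have h2 := hC0 p hp
    simp only []
    linarith

lemma lagrangian_lipschitz (hR : 0 < R) (hH : ContinuousOn H (Icc (-R) 0)) :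
    LipschitzWith (Real.toNNReal R) (lagrangian R H) := by
  have key : ∀ α β : ℝ, lagrangian R H α ≤ lagrangian R H β + R * |α - β| := by
    intro α β
    apply csSup_le ((nonempty_Icc.2 (by linarith)).image _)
    rintro y ⟨p, hp, rfl⟩
    have h1 : β * p - H p ≤ lagrangian R H β :=
      le_csSup (lagrangian_bddAbove hR hH β) (mem_image_of_mem _ hp)
    have h2 : (α - β) * p ≤ R * |α - β| := by
      have hpb : |p| ≤ R := by
        rw [abs_le]; constructor <;> [linarith [hp.1]; linarith [hp.2, hR.le]]
      calc (α - β) * p ≤ |(α - β) * p| := le_abs_self _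
      _ = |α - β| * |p| := abs_mul _ _
      _ ≤ |α - β| * R := by nlinarith [abs_nonneg (α - β)]
      _ = R * |α - β| := by ring
    simp only []
    linarith
  rw [lipschitzWith_iff_dist_le_mul]
  intro α β
  rw [Real.dist_eq, Real.dist_eq]
  have hcoe : ((Real.toNNReal R : NNReal) : ℝ) = R := Real.coe_toNNReal _ hR.le
  rw [hcoe, abs_le]
  constructor
  · have := key β α
    have habs : |β - α| = |α - β| := abs_sub_comm _ _
    linarith [key β α, habs ▸ (key β α)]
  · linarith [key α β]

lemma lagrangian_continuous (hR : 0 < R) (hH : ContinuousOn H (Icc (-R) 0)) :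
    Continuous (lagrangian R H) :=
  (lagrangian_lipschitz hR hH).continuous

end Lagrangian

/-! ### H1Path basics -/

namespace H1Path

variable {t : ℝ}

lemma isFiniteRestrict (a b : ℝ) : IsFiniteMeasure (volume.restrict (Ioc a b)) := by
  constructor
  rw [Measure.restrict_apply_univ]
  exact measure_Ioc_lt_top

lemma integrableOn_deriv (γ : H1Path t) : IntegrableOn γ.deriv (Ioc 0 t) volume := by
  haveI := isFiniteRestrict 0 t
  exact γ.deriv_memL2.integrable (by norm_num)

lemma intervalIntegrable_deriv (γ : H1Path t) {a b : ℝ} (ha : 0 ≤ a) (hab : a ≤ b) (hb : b ≤ t) :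
    IntervalIntegrable γ.deriv volume a b := by
  rw [intervalIntegrable_iff_integrableOn_Ioc_of_le hab]
  exact γ.integrableOn_deriv.mono_set (Ioc_subset_Ioc ha hb)

lemma continuousOn (γ : H1Path t) (ht : 0 ≤ t) : ContinuousOn γ.toFun (Icc 0 t) := by
  have h_int : IntegrableOn γ.deriv (Icc 0 t) volume := by
    rw [integrableOn_Icc_iff_integrableOn_Ioc]
    exact γ.integrableOn_deriv
  have hcont := intervalIntegral.continuousOn_primitive (f := γ.deriv) (a := 0) (b := t)
    (μ := volume) h_int
  have : ContinuousOn (fun x => γ.toFun 0 + ∫ s in Ioc 0 x, γ.deriv s) (Icc 0 t) :=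
    continuousOn_const.add hcont
  apply this.congr
  intro s hs
  rw [γ.self_eq_integral s hs, intervalIntegral.integral_of_le hs.1]

lemma sub_eq_integral (γ : H1Path t) {a b : ℝ} (ha : 0 ≤ a) (hab : a ≤ b) (hb : b ≤ t) :
    γ.toFun b - γ.toFun a = ∫ s in a..b, γ.deriv s := by
  have h1 := γ.self_eq_integral a ⟨ha, le_trans hab hb⟩
  have h2 := γ.self_eq_integral b ⟨le_trans ha hab, hb⟩
  have hadd := intervalIntegral.integral_add_adjacent_intervals
    (γ.intervalIntegrable_deriv (le_refl 0) ha (le_trans hab hb))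
    (γ.intervalIntegrable_deriv ha hab hb)
  rw [h1, h2, ← hadd]
  ring

/-- Restriction of a path to a shorter time interval. -/
def restrict (γ : H1Path t) {τ : ℝ} (hτ : τ ∈ Icc 0 t) : H1Path τ where
  toFun := γ.toFun
  deriv := γ.deriv
  deriv_memL2 := γ.deriv_memL2.mono_measure
    (Measure.restrict_mono (Ioc_subset_Ioc le_rfl hτ.2) le_rfl)
  self_eq_integral := fun s hs => γ.self_eq_integral s ⟨hs.1, le_trans hs.2 hτ.2⟩

@[simp] lemma restrict_toFun (γ : H1Path t) {τ : ℝ} (hτ : τ ∈ Icc 0 t) :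
    (γ.restrict hτ).toFun = γ.toFun := rfl

@[simp] lemma restrict_deriv (γ : H1Path t) {τ : ℝ} (hτ : τ ∈ Icc 0 t) :
    (γ.restrict hτ).deriv = γ.deriv := rfl

/-- The constant path. -/
def const (t x : ℝ) : H1Path t where
  toFun := fun _ => x
  deriv := fun _ => 0
  deriv_memL2 := memLp_const 0
  self_eq_integral := fun s _ => by simp

@[simp] lemma const_toFun (t x : ℝ) : (const t x).toFun = fun _ => x := rfl
@[simp] lemma const_deriv (t x : ℝ) : (const t x).deriv = fun _ => 0 := rfl

/-- Gluing two paths at an intermediate time `τ`. -/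
def glue {τ : ℝ} (γ₁ : H1Path τ) (γ₂ : H1Path t) (hτ : τ ∈ Icc 0 t)
    (he : γ₁.toFun τ = γ₂.toFun τ) : H1Path t where
  toFun := fun s => if s ≤ τ then γ₁.toFun s else γ₂.toFun s
  deriv := fun s => if s ≤ τ then γ₁.deriv s else γ₂.deriv s
  deriv_memL2 := by
    have heq : (fun s => if s ≤ τ then γ₁.deriv s else γ₂.deriv s)
        = (Iic τ).indicator γ₁.deriv + (Ioi τ).indicator γ₂.deriv := by
      funext s
      by_cases h : s ≤ τ
      · simp [h, indicator_of_mem (mem_Iic.2 h), indicator_of_notMem (fun hh => absurd h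
          (not_le.2 hh)),
          indicator_of_notMem (show s ∉ Ioi τ by simpa using h)]
      · push_neg at h
        simp [not_le.2 h, indicator_of_notMem (show s ∉ Iic τ by simpa using h),
          indicator_of_mem (mem_Ioi.2 h)]
    rw [heq]
    apply MemLp.add
    · rw [memLp_indicator_iff_restrict measurableSet_Iic]
      rw [Measure.restrict_restrict measurableSet_Iic]
      have : Iic τ ∩ Ioc 0 t = Ioc 0 τ := by
        ext s; simp only [mem_inter_iff, mem_Iic, mem_Ioc]
        constructor
        · rintro ⟨h1, h2, h3⟩; exact ⟨h2, h1⟩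
        · rintro ⟨h1, h2⟩; exact ⟨h2, h1, le_trans h2 hτ.2⟩
      rw [this]
      exact γ₁.deriv_memL2
    · rw [memLp_indicator_iff_restrict measurableSet_Ioi]
      rw [Measure.restrict_restrict measurableSet_Ioi]
      exact γ₂.deriv_memL2.mono_measure (Measure.restrict_mono inter_subset_right le_rfl)
  self_eq_integral := by
    intro s hs
    have h0τ : (0:ℝ) ≤ τ := hτ.1
    by_cases h : s ≤ τ
    · simp only [h, if_pos, if_pos h0τ]
      rw [γ₁.self_eq_integral s ⟨hs.1, h⟩]
      congr 1
      apply intervalIntegral.integral_congr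
      intro r hr
      rw [uIcc_of_le hs.1] at hr
      simp [le_trans hr.2 h]
    · push_neg at h
      have hii1 : IntervalIntegrable (fun r => if r ≤ τ then γ₁.deriv r else γ₂.deriv r)
          volume 0 τ := by
        apply IntervalIntegrable.congr_ae (γ₁.intervalIntegrable_deriv le_rfl h0τ le_rfl)
        rw [EventuallyEq, MeasureTheory.ae_restrict_iff' measurableSet_uIoc]
        filter_upwards with r hr
        rw [uIoc_of_le h0τ] at hr
        simp [hr.2]
      have hii2 : IntervalIntegrable (fun r => if r ≤ τ then γ₁.deriv r else γ₂.deriv r)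
          volume τ s := by
        apply IntervalIntegrable.congr_ae (γ₂.intervalIntegrable_deriv h0τ h.le hs.2)
        rw [EventuallyEq, MeasureTheory.ae_restrict_iff' measurableSet_uIoc]
        filter_upwards with r hr
        rw [uIoc_of_le h.le] at hr
        simp [not_le.2 hr.1]
      have hsplit := intervalIntegral.integral_add_adjacent_intervals
        (a := 0) (b := τ) (c := s) (μ := volume)
        (f := fun r => if r ≤ τ then γ₁.deriv r else γ₂.deriv r) hii1 hii2
      have e1 : (∫ r in (0:ℝ)..τ, if r ≤ τ then γ₁.deriv r else γ₂.deriv r)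
          = ∫ r in (0:ℝ)..τ, γ₁.deriv r := by
        apply intervalIntegral.integral_congr
        intro r hr
        rw [uIcc_of_le h0τ] at hr
        simp [hr.2]
      have e2 : (∫ r in τ..s, if r ≤ τ then γ₁.deriv r else γ₂.deriv r)
          = ∫ r in τ..s, γ₂.deriv r := by
        apply intervalIntegral.integral_congr_ae
        filter_upwards with r hr
        rw [uIoc_of_le h.le] at hr
        simp [not_le.2 hr.1]
      show (if s ≤ τ then γ₁.toFun s else γ₂.toFun s)
          = (if (0:ℝ) ≤ τ then γ₁.toFun 0 else γ₂.toFun 0) + _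
      rw [if_neg (not_le.2 h), if_pos h0τ, ← hsplit, e1, e2]
      have hA : γ₁.toFun τ = γ₁.toFun 0 + ∫ r in (0:ℝ)..τ, γ₁.deriv r :=
        γ₁.self_eq_integral τ ⟨h0τ, le_rfl⟩
      have hB : γ₂.toFun s - γ₂.toFun τ = ∫ r in τ..s, γ₂.deriv r :=
        γ₂.sub_eq_integral h0τ h.le hs.2
      rw [he] at hA
      linarith

lemma glue_toFun_of_le {τ : ℝ} (γ₁ : H1Path τ) (γ₂ : H1Path t) (hτ : τ ∈ Icc 0 t)
    (he : γ₁.toFun τ = γ₂.toFun τ) {s : ℝ} (hs : s ≤ τ) :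
    (glue γ₁ γ₂ hτ he).toFun s = γ₁.toFun s := if_pos hs

lemma glue_toFun_of_gt {τ : ℝ} (γ₁ : H1Path τ) (γ₂ : H1Path t) (hτ : τ ∈ Icc 0 t)
    (he : γ₁.toFun τ = γ₂.toFun τ) {s : ℝ} (hs : τ < s) :
    (glue γ₁ γ₂ hτ he).toFun s = γ₂.toFun s := if_neg (not_le.2 hs)

lemma glue_deriv_of_le {τ : ℝ} (γ₁ : H1Path τ) (γ₂ : H1Path t) (hτ : τ ∈ Icc 0 t)
    (he : γ₁.toFun τ = γ₂.toFun τ) {s : ℝ} (hs : s ≤ τ) :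
    (glue γ₁ γ₂ hτ he).deriv s = γ₁.deriv s := if_pos hs

lemma glue_deriv_of_gt {τ : ℝ} (γ₁ : H1Path τ) (γ₂ : H1Path t) (hτ : τ ∈ Icc 0 t)
    (he : γ₁.toFun τ = γ₂.toFun τ) {s : ℝ} (hs : τ < s) :
    (glue γ₁ γ₂ hτ he).deriv s = γ₂.deriv s := if_neg (not_le.2 hs)

lemma glue_toFun_at_t {τ : ℝ} (γ₁ : H1Path τ) (γ₂ : H1Path t) (hτ : τ ∈ Icc 0 t)
    (he : γ₁.toFun τ = γ₂.toFun τ) : (glue γ₁ γ₂ hτ he).toFun t = γ₂.toFun t := by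
  by_cases h : t ≤ τ
  · have : τ = t := le_antisymm hτ.2 h
    subst this
    rw [glue_toFun_of_le _ _ _ _ le_rfl, he]
  · exact glue_toFun_of_gt _ _ _ _ (not_le.1 h)

end H1Path

/-! ### Path cost integrand -/

/-- Bundled properties of the Lagrangians that we need. -/
structure LagHyp (R C0 : ℝ) (L : ℝ → ℝ) : Prop where
  nonneg : ∀ α, 0 ≤ L α
  lower : ∀ α, -R * α ≤ L α
  upper : ∀ α, L α ≤ R * |α| + C0
  cont : Continuous L
  Rpos : 0 < R
  C0nonneg : 0 ≤ C0

/-- The running cost integrand of a path. -/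
def pcF (LL LR A : ℝ → ℝ) {t : ℝ} (γ : H1Path t) : ℝ → ℝ := fun s =>
  if 0 < γ.toFun s then LR (γ.deriv s)
  else if γ.toFun s < 0 then LL (γ.deriv s)
  else - A s

lemma pathCost_eq (LL LR u0 A : ℝ → ℝ) (t : ℝ) (γ : H1Path t) :
    pathCost LL LR u0 A t γ = (∫ s in (0:ℝ)..t, pcF LL LR A γ s) + u0 (γ.toFun 0) := rfl

section Integrand

variable {RL RR C0 A0 : ℝ} {LL LR u0 A : ℝ → ℝ} {t : ℝ}

lemma pcF_nonneg (hL : LagHyp RL C0 LL) (hR : LagHyp RR C0 LR) (hA : ∀ s, A s ∈ Icc A0 0)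
    (γ : H1Path t) (s : ℝ) : 0 ≤ pcF LL LR A γ s := by
  unfold pcF
  split_ifs
  · exact hR.nonneg _
  · exact hL.nonneg _
  · simpa using (hA s).2

lemma pcF_abs_le (hL : LagHyp RL C0 LL) (hR : LagHyp RR C0 LR) (hA : ∀ s, A s ∈ Icc A0 0)
    (γ : H1Path t) (s : ℝ) :
    |pcF LL LR A γ s| ≤ max RL RR * |γ.deriv s| + max C0 (-A0) := by
  have hd : (0:ℝ) ≤ |γ.deriv s| := abs_nonneg _
  unfold pcF
  split_ifs
  · rw [abs_of_nonneg (hR.nonneg _)]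
    calc LR (γ.deriv s) ≤ RR * |γ.deriv s| + C0 := hR.upper _
    _ ≤ max RL RR * |γ.deriv s| + max C0 (-A0) := by
        have := le_max_right RL RR
        have := le_max_left C0 (-A0)
        nlinarith
  · rw [abs_of_nonneg (hL.nonneg _)]
    calc LL (γ.deriv s) ≤ RL * |γ.deriv s| + C0 := hL.upper _
    _ ≤ max RL RR * |γ.deriv s| + max C0 (-A0) := by
        have := le_max_left RL RR
        have := le_max_left C0 (-A0)
        nlinarith
  · rw [abs_of_nonneg (by simpa using (hA s).2)]
    have h1 : -A s ≤ -A0 := by have := (hA s).1; linarith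
    have h2 : (0:ℝ) ≤ max RL RR * |γ.deriv s| := by
      have : (0:ℝ) ≤ max RL RR := le_trans hL.Rpos.le (le_max_left _ _)
      positivity
    calc -A s ≤ max C0 (-A0) := le_trans h1 (le_max_right _ _)
    _ ≤ _ := by linarith

lemma pcF_aestronglyMeasurable (hL : LagHyp RL C0 LL) (hR : LagHyp RR C0 LR)
    (hAm : Measurable A) (ht : 0 ≤ t) (γ : H1Path t) :
    AEStronglyMeasurable (pcF LL LR A γ) (volume.restrict (Ioc 0 t)) := by
  have hg : AEMeasurable γ.toFun (volume.restrict (Ioc 0 t)) :=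
    ((γ.continuousOn ht).mono Ioc_subset_Icc_self).aemeasurable measurableSet_Ioc
  have hd : AEMeasurable γ.deriv (volume.restrict (Ioc 0 t)) :=
    γ.deriv_memL2.aestronglyMeasurable.aemeasurable
  set g' := hg.mk γ.toFun with hg'def
  set d' := hd.mk γ.deriv with hd'def
  have hF' : Measurable (fun s => if 0 < g' s then LR (d' s)
      else if g' s < 0 then LL (d' s) else -A s) := by
    apply Measurable.ite (measurableSet_lt measurable_const hg.measurable_mk)
    · exact (hR.cont.measurable).comp hd.measurable_mk
    · apply Measurable.ite (measurableSet_lt hg.measurable_mk measurable_const)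
      · exact (hL.cont.measurable).comp hd.measurable_mk
      · exact hAm.neg
  apply AEStronglyMeasurable.congr (hF'.aestronglyMeasurable)
  filter_upwards [hg.ae_eq_mk, hd.ae_eq_mk] with s h1 h2
  unfold pcF
  simp only [hg'def, hd'def, ← h1, ← h2]

lemma pcF_integrableOn (hL : LagHyp RL C0 LL) (hR : LagHyp RR C0 LR)
    (hAm : Measurable A) (hA : ∀ s, A s ∈ Icc A0 0) (ht : 0 ≤ t) (γ : H1Path t) :
    IntegrableOn (pcF LL LR A γ) (Ioc 0 t) volume := by
  have hbound : Integrable (fun s => max RL RR * |γ.deriv s| + max C0 (-A0))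
      (volume.restrict (Ioc 0 t)) := by
    haveI := H1Path.isFiniteRestrict 0 t
    exact ((γ.integrableOn_deriv.abs.const_mul _).add (integrable_const _))
  apply Integrable.mono' hbound (pcF_aestronglyMeasurable hL hR hAm ht γ)
  filter_upwards with s
  rw [Real.norm_eq_abs]
  exact pcF_abs_le hL hR hA γ s

lemma pcF_intervalIntegrable (hL : LagHyp RL C0 LL) (hR : LagHyp RR C0 LR)
    (hAm : Measurable A) (hA : ∀ s, A s ∈ Icc A0 0) {a b : ℝ}
    (ha : 0 ≤ a) (hab : a ≤ b) (hb : b ≤ t) (γ : H1Path t) :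
    IntervalIntegrable (pcF LL LR A γ) volume a b := by
  rw [intervalIntegrable_iff_integrableOn_Ioc_of_le hab]
  exact (pcF_integrableOn hL hR hAm hA (le_trans ha (le_trans hab hb)) γ).mono_set
    (Ioc_subset_Ioc ha hb)

lemma pathCost_split (hL : LagHyp RL C0 LL) (hR : LagHyp RR C0 LR)
    (hAm : Measurable A) (hA : ∀ s, A s ∈ Icc A0 0) {τ : ℝ} (hτ : τ ∈ Icc 0 t) (γ : H1Path t) :
    pathCost LL LR u0 A t γ = (∫ s in (0:ℝ)..τ, pcF LL LR A γ s)
      + (∫ s in τ..t, pcF LL LR A γ s) + u0 (γ.toFun 0) := by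
  rw [pathCost_eq]
  rw [← intervalIntegral.integral_add_adjacent_intervals
    (pcF_intervalIntegrable hL hR hAm hA le_rfl hτ.1 hτ.2 γ)
    (pcF_intervalIntegrable hL hR hAm hA hτ.1 hτ.2 le_rfl γ)]

end Integrand

/-! ### FTC for Lipschitz functions -/
open Topology

section LipFTC

variable {u : ℝ → ℝ} {K : NNReal}

private lemma eps_pos (n : ℕ) : (0:ℝ) < ((n:ℝ)+1)⁻¹ := by positivity

private lemma tendsto_seq_punctured (x : ℝ) :
    Tendsto (fun n : ℕ => x + ((n:ℝ)+1)⁻¹) atTop (𝓝[≠] x) := by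
  rw [tendsto_nhdsWithin_iff]
  constructor
  · have h1 : Tendsto (fun n : ℕ => ((n:ℝ)+1)⁻¹) atTop (𝓝 0) := by
      have := tendsto_one_div_add_atTop_nhds_zero_nat (𝕜 := ℝ)
      simpa [one_div] using this
    have := tendsto_const_nhds (α := ℕ) (x := x) (f := atTop).add h1
    simpa using this
  · filter_upwards with n
    have := eps_pos n
    simp only [mem_compl_iff, mem_singleton_iff]
    intro hc
    nlinarith [eps_pos n, congrArg (fun y => y - x) hc]

lemma lipschitz_abs_deriv_le (hu : LipschitzWith K u) (x : ℝ) : |deriv u x| ≤ (K:ℝ) := by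
  by_cases h : DifferentiableAt ℝ u x
  · have hd := h.hasDerivAt
    rw [hasDerivAt_iff_tendsto_slope] at hd
    have habs : Tendsto (fun y => |slope u x y|) (𝓝[≠] x) (𝓝 |deriv u x|) := hd.abs
    apply le_of_tendsto habs
    filter_upwards [self_mem_nhdsWithin] with y hy
    have hyx : y ≠ x := hy
    rw [slope_def_field]
    rw [abs_div]
    rw [div_le_iff₀ (abs_pos.2 (sub_ne_zero.2 hyx))]
    have := hu.dist_le_mul y x
    rw [Real.dist_eq, Real.dist_eq] at this
    calc |u y - u x| ≤ K * |y - x| := this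
    _ = (K:ℝ) * |y - x| := rfl
  · rw [deriv_zero_of_not_differentiableAt h]
    simp only [abs_zero]
    positivity

private lemma tendsto_avg (hu : Continuous u) (b : ℝ) :
    Tendsto (fun n : ℕ => (((n:ℝ)+1)) * ∫ s in b..(b + ((n:ℝ)+1)⁻¹), u s) atTop (𝓝 (u b)) := by
  have hG : HasDerivAt (fun y => ∫ s in b..y, u s) (u b) b := by
    apply intervalIntegral.integral_hasDerivAt_right
      (hu.intervalIntegrable _ _) (hu.stronglyMeasurableAtFilter _ _) hu.continuousAt
  rw [hasDerivAt_iff_tendsto_slope] at hG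
  have := hG.comp (tendsto_seq_punctured b)
  apply this.congr
  intro n
  rw [Function.comp_apply, slope_def_field]
  rw [intervalIntegral.integral_same (a := b) (f := u) (μ := volume)]
  have h1 : b + ((n:ℝ)+1)⁻¹ - b = ((n:ℝ)+1)⁻¹ := by ring
  rw [h1]
  rw [div_eq_inv_mul, inv_inv]
  ring_nf

lemma lipschitz_sub_eq_integral_deriv (hu : LipschitzWith K u) {a b : ℝ} (hab : a ≤ b) :
    u b - u a = ∫ s in a..b, deriv u s := by
  have huc : Continuous u := hu.continuous
  set F : ℕ → ℝ → ℝ := fun n s => (((n:ℝ)+1)) * (u (s + ((n:ℝ)+1)⁻¹) - u s) with hF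
  -- DCT
  have hDCT : Tendsto (fun n => ∫ s in a..b, F n s) atTop (𝓝 (∫ s in a..b, deriv u s)) := by
    apply intervalIntegral.tendsto_integral_filter_of_dominated_convergence
      (bound := fun _ => (K:ℝ))
    · filter_upwards with n
      apply Continuous.aestronglyMeasurable
      exact continuous_const.mul (((by continuity : Continuous fun s : ℝ =>
        u (s + ((n:ℝ)+1)⁻¹))).sub huc)
    · filter_upwards with n
      filter_upwards with s _
      rw [Real.norm_eq_abs, hF]
      simp only [abs_mul]
      have h1 : |u (s + ((n:ℝ)+1)⁻¹) - u s| ≤ (K:ℝ) * ((n:ℝ)+1)⁻¹ := by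
        have := hu.dist_le_mul (s + ((n:ℝ)+1)⁻¹) s
        rw [Real.dist_eq, Real.dist_eq] at this
        have h2 : |s + ((n:ℝ)+1)⁻¹ - s| = ((n:ℝ)+1)⁻¹ := by
          rw [show s + ((n:ℝ)+1)⁻¹ - s = ((n:ℝ)+1)⁻¹ by ring]
          exact abs_of_pos (eps_pos n)
        rw [h2] at this
        exact this
      have h3 : |((n:ℝ)+1)| = ((n:ℝ)+1) := abs_of_pos (by positivity)
      rw [h3]
      calc ((n:ℝ)+1) * |u (s + ((n:ℝ)+1)⁻¹) - u s| ≤ ((n:ℝ)+1) * ((K:ℝ) * ((n:ℝ)+1)⁻¹) := by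
            apply mul_le_mul_of_nonneg_left h1 (by positivity)
      _ = (K:ℝ) := by field_simp
    · exact intervalIntegrable_const
    · have hae := hu.ae_differentiableAt_of_real (μ := volume)
      filter_upwards [hae] with s hs _
      have hd := hs.hasDerivAt
      rw [hasDerivAt_iff_tendsto_slope] at hd
      have := hd.comp (tendsto_seq_punctured s)
      apply this.congr
      intro n
      rw [Function.comp_apply, slope_def_field]
      have h1 : s + ((n:ℝ)+1)⁻¹ - s = ((n:ℝ)+1)⁻¹ := by ring
      rw [h1, div_eq_inv_mul, inv_inv, hF]
  -- explicit computation of ∫ F n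
  have hcomp : ∀ n : ℕ, (∫ s in a..b, F n s)
      = (((n:ℝ)+1)) * (∫ s in b..(b + ((n:ℝ)+1)⁻¹), u s)
        - (((n:ℝ)+1)) * (∫ s in a..(a + ((n:ℝ)+1)⁻¹), u s) := by
    intro n
    set ε := ((n:ℝ)+1)⁻¹ with hε
    have hInt : ∀ c d : ℝ, IntervalIntegrable u volume c d := fun c d => huc.intervalIntegrable c d
    have hshift : (∫ s in a..b, u (s + ε)) = ∫ s in (a+ε)..(b+ε), u s :=
      intervalIntegral.integral_comp_add_right (a := a) (b := b) (f := u) ε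
    have hsub : (∫ s in a..b, F n s)
        = (((n:ℝ)+1)) * ((∫ s in a..b, u (s + ε)) - ∫ s in a..b, u s) := by
      rw [← intervalIntegral.integral_sub ((Continuous.intervalIntegrable
        (by continuity : Continuous fun s : ℝ => u (s + ε)) a b)) (hInt a b)]
      rw [← intervalIntegral.integral_const_mul]
    have h4 : (∫ s in a..(b+ε), u s) = (∫ s in a..b, u s) + ∫ s in b..(b+ε), u s :=
      (intervalIntegral.integral_add_adjacent_intervals (hInt a b) (hInt b (b+ε))).symm
    have h5 : (∫ s in a..(b+ε), u s) = (∫ s in a..(a+ε), u s) + ∫ s in (a+ε)..(b+ε), u s :=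
      (intervalIntegral.integral_add_adjacent_intervals (hInt a (a+ε)) (hInt (a+ε) (b+ε))).symm
    rw [hsub, hshift]
    have : (∫ s in (a+ε)..(b+ε), u s) - (∫ s in a..b, u s)
        = (∫ s in b..(b+ε), u s) - ∫ s in a..(a+ε), u s := by linarith
    rw [this]
    ring
  have hlim2 : Tendsto (fun n => ∫ s in a..b, F n s) atTop (𝓝 (u b - u a)) := by
    have := (tendsto_avg huc b).sub (tendsto_avg huc a)
    apply this.congr
    intro n
    rw [hcomp n]
  exact tendsto_nhds_unique hlim2 hDCT

end LipFTC

/-! ### Consequences for the initial datum -/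

section U0

variable {u0 : ℝ → ℝ} {K : NNReal}

lemma integrableOn_deriv_of_lipschitz (hu : LipschitzWith K u0) (a b : ℝ) :
    IntegrableOn (deriv u0) (Ioc a b) volume := by
  haveI := H1Path.isFiniteRestrict a b
  apply Integrable.mono' (integrable_const (K:ℝ))
  · exact (measurable_deriv u0).aestronglyMeasurable
  · filter_upwards with x
    rw [Real.norm_eq_abs]
    exact lipschitz_abs_deriv_le hu x

lemma ae_ne_zero : ∀ᵐ x : ℝ, x ≠ (0:ℝ) := by
  rw [ae_iff]
  have : {x : ℝ | ¬x ≠ 0} = {0} := by ext x; simp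
  rw [this]
  exact measure_singleton 0

lemma u0_antitone (hu : LipschitzWith K u0) (hd : ∀ᵐ x : ℝ, x ≠ 0 → deriv u0 x ≤ 0) :
    Antitone u0 := by
  intro a b hab
  have key : u0 b - u0 a ≤ 0 := by
    rw [lipschitz_sub_eq_integral_deriv hu hab, intervalIntegral.integral_of_le hab]
    apply integral_nonpos_of_ae
    apply ae_restrict_of_ae
    filter_upwards [hd, ae_ne_zero] with x hx hne
    exact hx hne
  linarith

lemma u0_incr_ge (hu : LipschitzWith K u0) {RR : ℝ}
    (hd : ∀ᵐ x : ℝ, 0 < x → -RR ≤ deriv u0 x) {a b : ℝ} (ha : 0 ≤ a) (hab : a ≤ b) :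
    -RR * (b - a) ≤ u0 b - u0 a := by
  rw [lipschitz_sub_eq_integral_deriv hu hab, intervalIntegral.integral_of_le hab]
  have hle : ∫ x in Ioc a b, (-RR : ℝ) ≤ ∫ x in Ioc a b, deriv u0 x := by
    apply integral_mono_ae (integrable_const _) (integrableOn_deriv_of_lipschitz hu a b)
    rw [EventuallyLE]
    rw [ae_restrict_iff' measurableSet_Ioc]
    filter_upwards [hd] with x hx hmem
    exact hx (lt_of_le_of_lt ha hmem.1)
  calc -RR * (b - a) = ∫ _x in Ioc a b, (-RR : ℝ) := by
        rw [setIntegral_const, Real.volume_real_Ioc_of_le hab, smul_eq_mul]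
        ring
  _ ≤ _ := hle

end U0

/-! ### Value function basics -/

section ValueBasics

variable {RL RR C0 A0 : ℝ} {LL LR u0 A : ℝ → ℝ} {K : NNReal} {t x : ℝ}

/-- The set of costs over which the infimum defining `valueFun` is taken. -/
def costSet (LL LR u0 A : ℝ → ℝ) (x t : ℝ) : Set ℝ :=
  {c : ℝ | ∃ γ : H1Path t, γ.toFun t = x ∧ pathCost LL LR u0 A t γ = c}

lemma valueFun_eq_csInf : valueFun LL LR u0 A x t = sInf (costSet LL LR u0 A x t) := rfl

lemma costSet_nonempty : (costSet LL LR u0 A x t).Nonempty :=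
  ⟨pathCost LL LR u0 A t (H1Path.const t x), ⟨H1Path.const t x, rfl, rfl⟩⟩

lemma pathCost_ge (hL : LagHyp RL C0 LL) (hR : LagHyp RR C0 LR)
    (hu : LipschitzWith K u0) (hmono : Antitone u0)
    (hdR : ∀ᵐ y : ℝ, 0 < y → -RR ≤ deriv u0 y)
    (hAm : Measurable A) (hAv : ∀ s, A s ∈ Icc A0 0) (ht : 0 ≤ t)
    (γ : H1Path t) (hγ : γ.toFun t = x) :
    u0 (max x 0) ≤ pathCost LL LR u0 A t γ := by
  set b := max x 0 with hb
  have hb0 : 0 ≤ b := le_max_right _ _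
  have hxb : x ≤ b := le_max_left _ _
  rw [pathCost_eq]
  by_cases hstart : γ.toFun 0 ≤ b
  · have h1 : 0 ≤ ∫ s in (0:ℝ)..t, pcF LL LR A γ s :=
      intervalIntegral.integral_nonneg ht (fun s _ => pcF_nonneg hL hR hAv γ s)
    have h2 : u0 b ≤ u0 (γ.toFun 0) := hmono hstart
    linarith
  · push_neg at hstart
    set S := {s | s ∈ Icc 0 t ∧ γ.toFun s ≤ b} with hS
    have hSne : S.Nonempty := ⟨t, ⟨le_refl 0 |>.trans ht, le_rfl⟩, by rw [hγ]; exact hxb⟩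
    have hSclosed : IsClosed S := by
      have : S = Icc 0 t ∩ γ.toFun ⁻¹' (Iic b) := by
        ext s; simp [hS, mem_inter_iff, and_comm]
      rw [this]
      exact (γ.continuousOn ht).preimage_isClosed_of_isClosed isClosed_Icc isClosed_Iic
    have hSbdd : BddBelow S := ⟨0, fun s hs => hs.1.1⟩
    set σ := sInf S with hσ
    have hσS : σ ∈ S := hSclosed.csInf_mem hSne hSbdd
    have hσmem : σ ∈ Icc 0 t := hσS.1
    have hpos : ∀ s, 0 ≤ s → s < σ → b < γ.toFun s := by
      intro s hs0 hsσ
      by_contra hc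
      push_neg at hc
      have : s ∈ S := ⟨⟨hs0, le_trans hsσ.le hσmem.2⟩, hc⟩
      exact absurd (csInf_le hSbdd this) (not_le.2 hsσ)
    -- split the integral
    have hii1 := pcF_intervalIntegrable hL hR hAm hAv le_rfl hσmem.1 hσmem.2 γ
    have hii2 := pcF_intervalIntegrable hL hR hAm hAv hσmem.1 hσmem.2 le_rfl γ
    have hsplit := intervalIntegral.integral_add_adjacent_intervals hii1 hii2
    have htail : 0 ≤ ∫ s in σ..t, pcF LL LR A γ s :=
      intervalIntegral.integral_nonneg hσmem.2 (fun s _ => pcF_nonneg hL hR hAv γ s)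
    -- lower bound on [0, σ]
    have hhead : RR * (γ.toFun 0 - γ.toFun σ) ≤ ∫ s in (0:ℝ)..σ, pcF LL LR A γ s := by
      have hmonoi : ∫ s in (0:ℝ)..σ, (-RR) * γ.deriv s ≤ ∫ s in (0:ℝ)..σ, pcF LL LR A γ s := by
        rw [intervalIntegral.integral_of_le hσmem.1, intervalIntegral.integral_of_le hσmem.1]
        apply integral_mono_ae
        · exact (γ.integrableOn_deriv.mono_set (Ioc_subset_Ioc le_rfl hσmem.2)).const_mul _
        · exact (pcF_integrableOn hL hR hAm hAv ht γ).mono_set (Ioc_subset_Ioc le_rfl hσmem.2)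
        · rw [EventuallyLE, ae_restrict_iff' measurableSet_Ioc]
          have hone : ∀ᵐ s : ℝ, s ≠ σ := by
            rw [ae_iff]
            have : {s : ℝ | ¬s ≠ σ} = {σ} := by ext s; simp
            rw [this]; exact measure_singleton σ
          filter_upwards [hone] with s hsne hmem
          have hlt : s < σ := lt_of_le_of_ne hmem.2 hsne
          have hgpos : 0 < γ.toFun s := lt_of_le_of_lt hb0 (hpos s hmem.1.le hlt)
          unfold pcF
          rw [if_pos hgpos]
          exact hR.lower _
      have hderint : ∫ s in (0:ℝ)..σ, (-RR) * γ.deriv s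
          = -RR * (γ.toFun σ - γ.toFun 0) := by
        rw [intervalIntegral.integral_const_mul, ← γ.sub_eq_integral le_rfl hσmem.1 hσmem.2]
      rw [hderint] at hmonoi
      calc RR * (γ.toFun 0 - γ.toFun σ) = -RR * (γ.toFun σ - γ.toFun 0) := by ring
      _ ≤ _ := hmonoi
    -- u0 increment bound
    have hincr : -RR * (γ.toFun 0 - b) ≤ u0 (γ.toFun 0) - u0 b :=
      u0_incr_ge hu hdR hb0 hstart.le
    have hγσb : γ.toFun σ ≤ b := hσS.2
    have hRR : 0 < RR := hR.Rpos
    rw [← hsplit]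
    nlinarith
  
lemma costSet_bddBelow (hL : LagHyp RL C0 LL) (hR : LagHyp RR C0 LR)
    (hu : LipschitzWith K u0) (hmono : Antitone u0)
    (hdR : ∀ᵐ y : ℝ, 0 < y → -RR ≤ deriv u0 y)
    (hAm : Measurable A) (hAv : ∀ s, A s ∈ Icc A0 0) (ht : 0 ≤ t) :
    BddBelow (costSet LL LR u0 A x t) := by
  refine ⟨u0 (max x 0), ?_⟩
  rintro c ⟨γ, hγ, rfl⟩
  exact pathCost_ge hL hR hu hmono hdR hAm hAv ht γ hγ

lemma valueFun_le_pathCost (hL : LagHyp RL C0 LL) (hR : LagHyp RR C0 LR)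
    (hu : LipschitzWith K u0) (hmono : Antitone u0)
    (hdR : ∀ᵐ y : ℝ, 0 < y → -RR ≤ deriv u0 y)
    (hAm : Measurable A) (hAv : ∀ s, A s ∈ Icc A0 0) (ht : 0 ≤ t)
    (γ : H1Path t) (hγ : γ.toFun t = x) :
    valueFun LL LR u0 A x t ≤ pathCost LL LR u0 A t γ :=
  csInf_le (costSet_bddBelow hL hR hu hmono hdR hAm hAv ht) ⟨γ, hγ, rfl⟩

lemma exists_nearopt (hε : (0:ℝ) < ε) :
    ∃ γ : H1Path t, γ.toFun t = x ∧
      pathCost LL LR u0 A t γ < valueFun LL LR u0 A x t + ε := by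
  obtain ⟨c, hc, hlt⟩ := Real.lt_sInf_add_pos (costSet_nonempty (LL := LL) (LR := LR)
    (u0 := u0) (A := A) (x := x) (t := t)) hε
  obtain ⟨γ, hγ, rfl⟩ := hc
  exact ⟨γ, hγ, hlt⟩

end ValueBasics

/-! ### Comparison lemmas for the value function -/

section Compare

variable {RL RR C0 A0 : ℝ} {LL LR u0 A B : ℝ → ℝ} {K : NNReal} {t x : ℝ}

lemma control_integrableOn (hAm : Measurable A) (hAv : ∀ s, A s ∈ Icc A0 0) (a b : ℝ) :
    IntegrableOn A (Ioc a b) volume := by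
  haveI := H1Path.isFiniteRestrict a b
  apply Integrable.mono' (integrable_const (-A0))
  · exact hAm.aestronglyMeasurable
  · filter_upwards with s
    rw [Real.norm_eq_abs, abs_le]
    have h := hAv s
    exact ⟨by linarith [h.1], by linarith [h.2, h.1]⟩

lemma pathCost_mono_control (hL : LagHyp RL C0 LL) (hR : LagHyp RR C0 LR)
    (hAm : Measurable A) (hAv : ∀ s, A s ∈ Icc A0 0)
    (hBm : Measurable B) (hBv : ∀ s, B s ∈ Icc A0 0)
    (hAB : ∀ s, A s ≤ B s) (ht : 0 ≤ t) (γ : H1Path t) :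
    pathCost LL LR u0 B t γ ≤ pathCost LL LR u0 A t γ := by
  rw [pathCost_eq, pathCost_eq]
  have : ∫ s in (0:ℝ)..t, pcF LL LR B γ s ≤ ∫ s in (0:ℝ)..t, pcF LL LR A γ s := by
    apply intervalIntegral.integral_mono_on ht
      (pcF_intervalIntegrable hL hR hBm hBv le_rfl ht le_rfl γ)
      (pcF_intervalIntegrable hL hR hAm hAv le_rfl ht le_rfl γ)
    intro s _
    unfold pcF
    split_ifs
    · exact le_rfl
    · exact le_rfl
    · simpa using hAB s
  linarith

lemma valueFun_anti_control (hL : LagHyp RL C0 LL) (hR : LagHyp RR C0 LR)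
    (hu : LipschitzWith K u0) (hmono : Antitone u0)
    (hdR : ∀ᵐ y : ℝ, 0 < y → -RR ≤ deriv u0 y)
    (hAm : Measurable A) (hAv : ∀ s, A s ∈ Icc A0 0)
    (hBm : Measurable B) (hBv : ∀ s, B s ∈ Icc A0 0)
    (hAB : ∀ s, A s ≤ B s) (ht : 0 ≤ t) :
    valueFun LL LR u0 B x t ≤ valueFun LL LR u0 A x t := by
  rw [valueFun_eq_csInf (A := A)]
  apply le_csInf costSet_nonempty
  rintro c ⟨γ, hγ, rfl⟩
  calc valueFun LL LR u0 B x t ≤ pathCost LL LR u0 B t γ :=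
        valueFun_le_pathCost hL hR hu hmono hdR hBm hBv ht γ hγ
  _ ≤ pathCost LL LR u0 A t γ := pathCost_mono_control hL hR hAm hAv hBm hBv hAB ht γ

lemma valueFun_sitting (hL : LagHyp RL C0 LL) (hR : LagHyp RR C0 LR)
    (hu : LipschitzWith K u0) (hmono : Antitone u0)
    (hdR : ∀ᵐ y : ℝ, 0 < y → -RR ≤ deriv u0 y)
    (hAm : Measurable A) (hAv : ∀ s, A s ∈ Icc A0 0)
    {t t' : ℝ} (ht : 0 ≤ t) (htt' : t ≤ t') :
    valueFun LL LR u0 A 0 t' ≤ valueFun LL LR u0 A 0 t + (-A0) * (t' - t) := by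
  apply le_of_forall_pos_le_add
  intro ε hε
  obtain ⟨γ, hγ, hcost⟩ := exists_nearopt (LL := LL) (LR := LR) (u0 := u0) (A := A)
    (x := (0:ℝ)) (t := t) hε
  have ht' : (0:ℝ) ≤ t' := le_trans ht htt'
  have he : γ.toFun t = (H1Path.const t' 0).toFun t := by rw [hγ]; rfl
  set η := H1Path.glue γ (H1Path.const t' 0) (show t ∈ Icc 0 t' from ⟨ht, htt'⟩) he with hηdef
  have hηend : η.toFun t' = 0 := by
    rw [hηdef, H1Path.glue_toFun_at_t]; rfl
  have hcost_η : pathCost LL LR u0 A t' η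
      ≤ pathCost LL LR u0 A t γ + (-A0) * (t' - t) := by
    rw [pathCost_split hL hR hAm hAv (τ := t) ⟨ht, htt'⟩ η, pathCost_eq]
    have h0 : η.toFun 0 = γ.toFun 0 := H1Path.glue_toFun_of_le _ _ _ _ ht
    have h1 : (∫ s in (0:ℝ)..t, pcF LL LR A η s) = ∫ s in (0:ℝ)..t, pcF LL LR A γ s := by
      apply intervalIntegral.integral_congr
      intro s hs
      rw [uIcc_of_le ht] at hs
      unfold pcF
      rw [hηdef, H1Path.glue_toFun_of_le _ _ _ _ hs.2, H1Path.glue_deriv_of_le _ _ _ _ hs.2]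
    have h2 : (∫ s in t..t', pcF LL LR A η s) ≤ (-A0) * (t' - t) := by
      have he2 : (∫ s in t..t', pcF LL LR A η s) = ∫ s in t..t', (- A s) := by
        apply intervalIntegral.integral_congr_ae
        have hone : ∀ᵐ s : ℝ, s ≠ t := by
          rw [ae_iff]
          have : {s : ℝ | ¬s ≠ t} = {t} := by ext s; simp
          rw [this]; exact measure_singleton t
        filter_upwards [hone] with s hsne hmem
        rw [uIoc_of_le htt'] at hmem
        have hst : t < s := hmem.1
        unfold pcF
        rw [hηdef, H1Path.glue_toFun_of_gt _ _ _ _ hst, H1Path.glue_deriv_of_gt _ _ _ _ hst]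
        simp
      rw [he2]
      have : (∫ s in t..t', (- A s)) ≤ ∫ s in t..t', (-A0) := by
        apply intervalIntegral.integral_mono_on htt'
        · rw [intervalIntegrable_iff_integrableOn_Ioc_of_le htt']
          exact (control_integrableOn hAm hAv t t').neg
        · exact intervalIntegrable_const
        · intro s _
          have := (hAv s).1
          linarith
      calc (∫ s in t..t', (- A s)) ≤ ∫ s in t..t', (-A0) := this
      _ = (-A0) * (t' - t) := by
          rw [intervalIntegral.integral_const, smul_eq_mul]; ring
    rw [h0, h1]
    linarith
  calc valueFun LL LR u0 A 0 t' ≤ pathCost LL LR u0 A t' η :=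
        valueFun_le_pathCost hL hR hu hmono hdR hAm hAv ht' η hηend
  _ ≤ pathCost LL LR u0 A t γ + (-A0) * (t' - t) := hcost_η
  _ ≤ valueFun LL LR u0 A 0 t + (-A0) * (t' - t) + ε := by linarith

end Compare

/-! ### The surgery lemma -/

section Surgery

variable {RL RR C0 A0 : ℝ} {LL LR u0 : ℝ → ℝ} {K : NNReal}

open Classical in
/-- The control modified to equal `A0` on `Kset`. -/
noncomputable def modControl (Kset : Set ℝ) (A0 : ℝ) (Abar : ℝ → ℝ) : ℝ → ℝ :=
  fun s => if s ∈ Kset then A0 else Abar s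

lemma modControl_of_mem {Kset : Set ℝ} {A0 : ℝ} {Abar : ℝ → ℝ} {s : ℝ} (h : s ∈ Kset) :
    modControl Kset A0 Abar s = A0 := by simp [modControl, h]

lemma modControl_of_not_mem {Kset : Set ℝ} {A0 : ℝ} {Abar : ℝ → ℝ} {s : ℝ} (h : s ∉ Kset) :
    modControl Kset A0 Abar s = Abar s := by simp [modControl, h]

lemma modControl_measurable {Kset : Set ℝ} {A0 : ℝ} {Abar : ℝ → ℝ}
    (hK : MeasurableSet Kset) (hm : Measurable Abar) :
    Measurable (modControl Kset A0 Abar) := by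
  classical
  unfold modControl
  exact Measurable.ite hK measurable_const hm

lemma surgery (hL : LagHyp RL C0 LL) (hR : LagHyp RR C0 LR)
    (hu : LipschitzWith K u0) (hmono : Antitone u0)
    (hdR : ∀ᵐ y : ℝ, 0 < y → -RR ≤ deriv u0 y) (hA00 : A0 ≤ 0)
    {T : ℝ} {Abar : ℝ → ℝ} (hAbarm : Measurable Abar) (hAbarv : ∀ s, Abar s ∈ Icc A0 0)
    {Kset : Set ℝ} (hKc : IsCompact Kset) (hKsub : Kset ⊆ Ioc 0 T)
    (hKC : ∀ τ ∈ Kset, valueFun LL LR u0 Abar 0 τ = valueFun LL LR u0 (fun _ => A0) 0 τ)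
    {x t : ℝ} (ht : 0 ≤ t) (htT : t ≤ T) :
    valueFun LL LR u0 (modControl Kset A0 Abar) x t
      = valueFun LL LR u0 Abar x t := by
  set At : ℝ → ℝ := modControl Kset A0 Abar with hAt
  have hAtm : Measurable At := modControl_measurable hKc.measurableSet hAbarm
  have hAtv : ∀ s, At s ∈ Icc A0 0 := by
    intro s
    by_cases h : s ∈ Kset
    · rw [hAt, modControl_of_mem h]
      exact ⟨le_rfl, hA00⟩
    · rw [hAt, modControl_of_not_mem h]
      exact hAbarv s
  have hAtle : ∀ s, At s ≤ Abar s := by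
    intro s
    by_cases h : s ∈ Kset
    · rw [hAt, modControl_of_mem h]
      exact (hAbarv s).1
    · rw [hAt, modControl_of_not_mem h]
  have hA0cv : ∀ s : ℝ, (fun _ : ℝ => A0) s ∈ Icc A0 0 := fun s => ⟨le_rfl, hA00⟩
  apply le_antisymm
  · -- the hard direction, via path surgery
    apply le_of_forall_pos_le_add
    intro ε hε
    have hε2 : (0:ℝ) < ε/2 := by linarith
    obtain ⟨γ, hγend, hγcost⟩ := exists_nearopt (LL := LL) (LR := LR) (u0 := u0)
      (A := Abar) (x := x) (t := t) hε2
    set S := {s | s ∈ Icc 0 t ∧ γ.toFun s = 0 ∧ s ∈ Kset} with hS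
    by_cases hSne : S.Nonempty
    · -- surgery at τ = sup S
      have hSclosed : IsClosed S := by
        have : S = (Icc 0 t ∩ γ.toFun ⁻¹' ({0} : Set ℝ)) ∩ Kset := by
          ext s
          simp only [hS, mem_inter_iff, mem_setOf_eq, mem_preimage, mem_singleton_iff]
          tauto
        rw [this]
        exact ((γ.continuousOn ht).preimage_isClosed_of_isClosed isClosed_Icc
          isClosed_singleton).inter hKc.isClosed
      have hSbdd : BddAbove S := ⟨t, fun s hs => hs.1.2⟩
      set τ := sSup S with hτdef
      have hτS : τ ∈ S := hSclosed.csSup_mem hSne hSbdd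
      have hτIcc : τ ∈ Icc 0 t := hτS.1
      have hγτ : γ.toFun τ = 0 := hτS.2.1
      have hτK : τ ∈ Kset := hτS.2.2
      have hC : valueFun LL LR u0 Abar 0 τ = valueFun LL LR u0 (fun _ => A0) 0 τ := hKC τ hτK
      obtain ⟨η₀, hη₀end, hη₀cost⟩ := exists_nearopt (LL := LL) (LR := LR) (u0 := u0)
        (A := fun _ => A0) (x := (0:ℝ)) (t := τ) hε2
      have he : η₀.toFun τ = γ.toFun τ := by rw [hη₀end, hγτ]
      set η := H1Path.glue η₀ γ hτIcc he with hηdef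
      have hηend : η.toFun t = x := by rw [H1Path.glue_toFun_at_t, hγend]
      have hτ0 : 0 ≤ τ := hτIcc.1
      have hτt : τ ≤ t := hτIcc.2
      -- pieces
      have hP1 : (∫ s in (0:ℝ)..τ, pcF LL LR At η s) + u0 (η.toFun 0)
          ≤ (∫ s in (0:ℝ)..τ, pcF LL LR Abar γ s) + u0 (γ.toFun 0) + ε/2 := by
        have e1 : (∫ s in (0:ℝ)..τ, pcF LL LR At η s)
            = ∫ s in (0:ℝ)..τ, pcF LL LR At η₀ s := by
          apply intervalIntegral.integral_congr
          intro s hs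
          rw [uIcc_of_le hτ0] at hs
          unfold pcF
          rw [hηdef, H1Path.glue_toFun_of_le _ _ _ _ hs.2, H1Path.glue_deriv_of_le _ _ _ _ hs.2]
        have e2 : (∫ s in (0:ℝ)..τ, pcF LL LR At η₀ s)
            ≤ ∫ s in (0:ℝ)..τ, pcF LL LR (fun _ => A0) η₀ s := by
          apply intervalIntegral.integral_mono_on hτ0
            (pcF_intervalIntegrable hL hR hAtm hAtv le_rfl hτ0 le_rfl η₀)
            (pcF_intervalIntegrable hL hR measurable_const hA0cv le_rfl hτ0 le_rfl η₀)
          intro s _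
          unfold pcF
          split_ifs
          · exact le_rfl
          · exact le_rfl
          · simp only [neg_le_neg_iff]
            exact (hAtv s).1
        have e3 : (∫ s in (0:ℝ)..τ, pcF LL LR (fun _ => A0) η₀ s) + u0 (η₀.toFun 0)
            = pathCost LL LR u0 (fun _ => A0) τ η₀ := (pathCost_eq _ _ _ _ _ _).symm
        have e4 : pathCost LL LR u0 (fun _ => A0) τ η₀
            < valueFun LL LR u0 Abar 0 τ + ε/2 := by rw [hC]; exact hη₀cost
        have e5 : valueFun LL LR u0 Abar 0 τ
            ≤ (∫ s in (0:ℝ)..τ, pcF LL LR Abar γ s) + u0 (γ.toFun 0) := by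
          have := valueFun_le_pathCost (x := (0:ℝ)) hL hR hu hmono hdR hAbarm hAbarv hτ0
            (γ.restrict hτIcc) (by rw [H1Path.restrict_toFun]; exact hγτ)
          rw [pathCost_eq] at this
          exact this
        have h0 : η.toFun 0 = η₀.toFun 0 := H1Path.glue_toFun_of_le _ _ _ _ hτ0
        rw [e1, h0]
        linarith
      have hP2 : (∫ s in τ..t, pcF LL LR At η s) = ∫ s in τ..t, pcF LL LR Abar γ s := by
        apply intervalIntegral.integral_congr_ae
        filter_upwards with s hmem
        rw [uIoc_of_le hτt] at hmem
        have hτs : τ < s := hmem.1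
        have hηs : η.toFun s = γ.toFun s := H1Path.glue_toFun_of_gt _ _ _ _ hτs
        have hηs' : η.deriv s = γ.deriv s := H1Path.glue_deriv_of_gt _ _ _ _ hτs
        unfold pcF
        rw [hηs, hηs']
        by_cases hz : γ.toFun s = 0
        · have hnotK : s ∉ Kset := by
            intro hsK
            have : s ∈ S := ⟨⟨le_trans hτ0 hτs.le, hmem.2⟩, hz, hsK⟩
            exact absurd (le_csSup hSbdd this) (not_le.2 hτs)
          rw [hz]
          simp only [lt_irrefl, if_false, if_neg (lt_irrefl (0:ℝ))]
          rw [hAt, modControl_of_not_mem hnotK]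
        · split_ifs with h1 h2
          · rfl
          · rfl
          · exact absurd (le_antisymm (not_lt.1 h1) (not_lt.1 h2)) hz
      have hsplitη := pathCost_split (u0 := u0) hL hR hAtm hAtv hτIcc η
      have hsplitγ := pathCost_split (u0 := u0) hL hR hAbarm hAbarv hτIcc γ
      have hfinal : pathCost LL LR u0 At t η ≤ pathCost LL LR u0 Abar t γ + ε/2 := by
        rw [hsplitη, hsplitγ, hP2]
        linarith
      calc valueFun LL LR u0 At x t ≤ pathCost LL LR u0 At t η :=
            valueFun_le_pathCost hL hR hu hmono hdR hAtm hAtv ht η hηend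
      _ ≤ pathCost LL LR u0 Abar t γ + ε/2 := hfinal
      _ ≤ valueFun LL LR u0 Abar x t + ε := by linarith
    · -- no surgery needed: costs agree along γ
      have hcosteq : pathCost LL LR u0 At t γ = pathCost LL LR u0 Abar t γ := by
        rw [pathCost_eq, pathCost_eq]
        congr 1
        apply intervalIntegral.integral_congr
        intro s hs
        rw [uIcc_of_le ht] at hs
        unfold pcF
        by_cases hz : γ.toFun s = 0
        · have hnotK : s ∉ Kset := by
            intro hsK
            exact hSne ⟨s, hs, hz, hsK⟩
          rw [hz]
          simp only [lt_irrefl, if_false, if_neg (lt_irrefl (0:ℝ))]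
          rw [hAt, modControl_of_not_mem hnotK]
        · split_ifs with h1 h2
          · rfl
          · rfl
          · exact absurd (le_antisymm (not_lt.1 h1) (not_lt.1 h2)) hz
      calc valueFun LL LR u0 At x t ≤ pathCost LL LR u0 At t γ :=
            valueFun_le_pathCost hL hR hu hmono hdR hAtm hAtv ht γ hγend
      _ = pathCost LL LR u0 Abar t γ := hcosteq
      _ ≤ valueFun LL LR u0 Abar x t + ε := by linarith
  · -- easy direction: At ≤ Abar pointwise
    exact valueFun_anti_control hL hR hu hmono hdR hAtm hAtv hAbarm hAbarv hAtle ht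

end Surgery

/-! ### Auxiliary lemmas for the main proof -/

lemma antitone_extension {g : ℝ → ℝ} {B : ℝ}
    (hg : ∀ t t' : ℝ, 0 ≤ t → t ≤ t' → g t' ≤ g t) (hB : ∀ t, 0 ≤ t → g t ≤ B) :
    Antitone (fun t => if 0 < t then g t else B) := by
  intro s t hst
  by_cases hs : 0 < s
  · have ht : 0 < t := lt_of_lt_of_le hs hst
    simp only [if_pos hs, if_pos ht]
    exact hg s t hs.le hst
  · by_cases ht : 0 < t
    · simp only [if_neg hs, if_pos ht]
      exact hB t ht.le
    · simp only [if_neg hs, if_neg ht]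
      exact le_rfl

theorem stmt4_aux {T RL RR C0 : ℝ} (hT : 0 < T)
    {LL LR u0 : ℝ → ℝ} {K : NNReal} {A0 : ℝ}
    (hL : LagHyp RL C0 LL) (hR : LagHyp RR C0 LR)
    (hu : LipschitzWith K u0) (hmono : Antitone u0)
    (hdR : ∀ᵐ y : ℝ, 0 < y → -RR ≤ deriv u0 y) (hA00 : A0 ≤ 0)
    (ψ : ℝ → ℝ → ℝ → ℝ)
    (f : ℝ → ℝ) (hf : MonotoneOn f (Icc A0 0))
    (J : (ℝ → ℝ) → ℝ)
    (hJ : ∀ A : ℝ → ℝ, J A =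
      (∫ t in Ioc (0:ℝ) T, ∫ x : ℝ, ψ x t (deriv (fun y => valueFun LL LR u0 A y t) x))
        + ∫ t in Ioc (0:ℝ) T, f (A t))
    (Abar : ℝ → ℝ) (hAbarAdm : Admissible A0 Abar)
    (hAbarMin : ∀ A : ℝ → ℝ, Admissible A0 A → J Abar ≤ J A)
    (hAbarMin2 : ∀ A : ℝ → ℝ,
      (Admissible A0 A ∧ ∀ B : ℝ → ℝ, Admissible A0 B → J A ≤ J B) →
      ∫ s in Ioc (0:ℝ) T, Abar s ≤ ∫ s in Ioc (0:ℝ) T, A s) :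
    ∀ᵐ t ∂(volume.restrict (Ioc (0:ℝ) T)),
      valueFun LL LR u0 Abar 0 t = valueFun LL LR u0 (fun _ => A0) 0 t → Abar t = A0 := by
  obtain ⟨hAbarm, hAbarv⟩ := hAbarAdm
  have hA0cv : ∀ s : ℝ, (fun _ : ℝ => A0) s ∈ Icc A0 0 := fun s => ⟨le_rfl, hA00⟩
  -- measurable monotone representatives of t ↦ valueFun ... 0 t
  have hwkey : ∀ (A : ℝ → ℝ), Measurable A → (∀ s, A s ∈ Icc A0 0) →
      ∃ w : ℝ → ℝ, Measurable w ∧ ∀ t : ℝ, 0 < t →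
        valueFun LL LR u0 A 0 t = w t - A0 * t := by
    intro A hAm hAv
    set g : ℝ → ℝ := fun t => valueFun LL LR u0 A 0 t + A0 * t with hg
    have hganti : ∀ t t' : ℝ, 0 ≤ t → t ≤ t' → g t' ≤ g t := by
      intro t t' ht htt'
      have := valueFun_sitting (u0 := u0) hL hR hu hmono hdR hAm hAv ht htt'
      simp only [hg]
      nlinarith
    have hv0 : valueFun LL LR u0 A 0 0 ≤ u0 0 := by
      have h := valueFun_le_pathCost (x := (0:ℝ)) (t := (0:ℝ)) hL hR hu hmono hdR hAm hAv
        le_rfl (H1Path.const 0 0) rfl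
      rw [pathCost_eq] at h
      simpa using h
    have hgB : ∀ t, 0 ≤ t → g t ≤ u0 0 := by
      intro t ht
      have h1 := hganti 0 t le_rfl ht
      simp only [hg] at h1 ⊢
      nlinarith [hv0]
    set w : ℝ → ℝ := fun t => if 0 < t then g t else u0 0 with hw
    refine ⟨w, (antitone_extension hganti hgB).measurable, ?_⟩
    intro t ht
    simp only [hw, if_pos ht, hg]
    ring
  obtain ⟨w1, hw1m, hw1⟩ := hwkey Abar hAbarm hAbarv
  obtain ⟨w2, hw2m, hw2⟩ := hwkey (fun _ => A0) measurable_const hA0cv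
  -- the bad set
  set D : Set ℝ := Ioc 0 T ∩ ({t | w1 t = w2 t} ∩ {t | A0 < Abar t}) with hD
  have hDmeas : MeasurableSet D := by
    apply measurableSet_Ioc.inter
    apply MeasurableSet.inter
    · have : {t | w1 t = w2 t} = (fun t => w1 t - w2 t) ⁻¹' ({0} : Set ℝ) := by
        ext t; simp [sub_eq_zero]
      rw [this]
      exact (hw1m.sub hw2m) (measurableSet_singleton 0)
    · exact measurableSet_lt measurable_const hAbarm
  -- D is null
  have hDnull : volume D = 0 := by
    by_contra hpos
    have hDfin : volume D ≠ ⊤ := by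
      apply ne_of_lt
      calc volume D ≤ volume (Ioc (0:ℝ) T) := measure_mono (by rw [hD]; exact inter_subset_left)
      _ < ⊤ := measure_Ioc_lt_top
    obtain ⟨Kset, hKsub, hKc, hKlt⟩ := hDmeas.exists_isCompact_lt_add hDfin hpos
    have hKpos : 0 < volume Kset := by
      by_contra hz
      push_neg at hz
      have : volume Kset = 0 := le_antisymm hz zero_le
      rw [this, zero_add] at hKlt
      exact absurd hKlt (lt_irrefl _)
    have hKIoc : Kset ⊆ Ioc 0 T := hKsub.trans (by rw [hD]; exact inter_subset_left)
    have hKC : ∀ τ ∈ Kset, valueFun LL LR u0 Abar 0 τ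
        = valueFun LL LR u0 (fun _ => A0) 0 τ := by
      intro τ hτ
      have hτD : τ ∈ D := hKsub hτ
      have hτIoc : τ ∈ Ioc (0:ℝ) T := hKIoc hτ
      have hweq : w1 τ = w2 τ := (hτD.2).1
      rw [hw1 τ hτIoc.1, hw2 τ hτIoc.1, hweq]
    -- the modified control
    set At : ℝ → ℝ := modControl Kset A0 Abar with hAt
    have hAtm : Measurable At := modControl_measurable hKc.measurableSet hAbarm
    have hAtv : ∀ s, At s ∈ Icc A0 0 := by
      intro s
      by_cases h : s ∈ Kset
      · rw [hAt, modControl_of_mem h]; exact ⟨le_rfl, hA00⟩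
      · rw [hAt, modControl_of_not_mem h]; exact hAbarv s
    have hAtle : ∀ s, At s ≤ Abar s := by
      intro s
      by_cases h : s ∈ Kset
      · rw [hAt, modControl_of_mem h]; exact (hAbarv s).1
      · rw [hAt, modControl_of_not_mem h]
    have hAtAdm : Admissible A0 At := ⟨hAtm, hAtv⟩
    -- value functions agree
    have hvals : ∀ t ∈ Ioc (0:ℝ) T, ∀ x : ℝ,
        valueFun LL LR u0 At x t = valueFun LL LR u0 Abar x t := by
      intro t htm x
      exact surgery hL hR hu hmono hdR hA00 hAbarm hAbarv hKc hKIoc hKC htm.1.le htm.2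
    -- J At ≤ J Abar, hence equal
    have hJfluxeq : (∫ t in Ioc (0:ℝ) T, ∫ x : ℝ,
          ψ x t (deriv (fun y => valueFun LL LR u0 At y t) x))
        = ∫ t in Ioc (0:ℝ) T, ∫ x : ℝ,
          ψ x t (deriv (fun y => valueFun LL LR u0 Abar y t) x) := by
      apply setIntegral_congr_fun measurableSet_Ioc
      intro t htm
      have heq : (fun y => valueFun LL LR u0 At y t) = fun y => valueFun LL LR u0 Abar y t := by
        funext y
        exact hvals t htm y
      show (∫ x : ℝ, ψ x t (deriv (fun y => valueFun LL LR u0 At y t) x))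
          = ∫ x : ℝ, ψ x t (deriv (fun y => valueFun LL LR u0 Abar y t) x)
      rw [heq]
    -- the f-part
    set F : ℝ → ℝ := fun a => f (max A0 (min a 0)) with hF
    have hFmono : Monotone F := by
      intro a b hab
      apply hf
      · constructor
        · exact le_max_left _ _
        · exact max_le hA00 (min_le_right _ _)
      · constructor
        · exact le_max_left _ _
        · exact max_le hA00 (min_le_right _ _)
      · exact max_le_max le_rfl (min_le_min hab le_rfl)
    have hFeq : ∀ (A : ℝ → ℝ), (∀ s, A s ∈ Icc A0 0) → ∀ s, F (A s) = f (A s) := by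
      intro A hAv s
      have h := hAv s
      simp only [hF]
      rw [min_eq_left h.2, max_eq_right h.1]
    have hFbdd : ∀ y : ℝ, |F y| ≤ max |f A0| |f 0| := by
      intro y
      have hmem : max A0 (min y 0) ∈ Icc A0 0 :=
        ⟨le_max_left _ _, max_le hA00 (min_le_right _ _)⟩
      have h1 : f A0 ≤ F y := hf ⟨le_rfl, hA00⟩ hmem hmem.1
      have h2 : F y ≤ f 0 := hf hmem ⟨hA00, le_rfl⟩ hmem.2
      rw [abs_le]
      constructor
      · calc -(max |f A0| |f 0|) ≤ -|f A0| := by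
              simp only [neg_le_neg_iff]; exact le_max_left _ _
        _ ≤ f A0 := neg_abs_le _
        _ ≤ F y := h1
      · calc F y ≤ f 0 := h2
        _ ≤ |f 0| := le_abs_self _
        _ ≤ max |f A0| |f 0| := le_max_right _ _
    have hFint : ∀ (A : ℝ → ℝ), Measurable A →
        IntegrableOn (fun t => F (A t)) (Ioc (0:ℝ) T) volume := by
      intro A hAm
      haveI := H1Path.isFiniteRestrict (0:ℝ) T
      apply Integrable.mono' (integrable_const (max |f A0| |f 0|))
      · exact (hFmono.measurable.comp hAm).aestronglyMeasurable
      · filter_upwards with s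
        rw [Real.norm_eq_abs]
        exact hFbdd _
    have hfpart : (∫ t in Ioc (0:ℝ) T, f (At t)) ≤ ∫ t in Ioc (0:ℝ) T, f (Abar t) := by
      have e1 : (∫ t in Ioc (0:ℝ) T, f (At t)) = ∫ t in Ioc (0:ℝ) T, F (At t) := by
        apply setIntegral_congr_fun measurableSet_Ioc
        intro s _
        exact (hFeq At hAtv s).symm
      have e2 : (∫ t in Ioc (0:ℝ) T, f (Abar t)) = ∫ t in Ioc (0:ℝ) T, F (Abar t) := by
        apply setIntegral_congr_fun measurableSet_Ioc
        intro s _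
        exact (hFeq Abar hAbarv s).symm
      rw [e1, e2]
      apply integral_mono (hFint At hAtm) (hFint Abar hAbarm)
      intro s
      exact hFmono (hAtle s)
    have hJle : J At ≤ J Abar := by
      rw [hJ At, hJ Abar, hJfluxeq]
      linarith
    have hJeq : J At = J Abar := le_antisymm hJle (hAbarMin At hAtAdm)
    have hAtmin : ∀ B : ℝ → ℝ, Admissible A0 B → J At ≤ J B := by
      intro B hB
      rw [hJeq]
      exact hAbarMin B hB
    have hint := hAbarMin2 At ⟨hAtAdm, hAtmin⟩
    -- derive contradiction
    have hsub : ∀ s, Abar s - At s = Kset.indicator (fun s => Abar s - A0) s := by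
      intro s
      by_cases h : s ∈ Kset
      · rw [hAt, modControl_of_mem h, indicator_of_mem h]
      · rw [hAt, modControl_of_not_mem h, indicator_of_notMem h]
        ring
    have hIabar := control_integrableOn hAbarm hAbarv (0:ℝ) T
    have hIat := control_integrableOn hAtm hAtv (0:ℝ) T
    have hdiff : (∫ s in Ioc (0:ℝ) T, Abar s) - (∫ s in Ioc (0:ℝ) T, At s)
        = ∫ s in Kset, (Abar s - A0) := by
      rw [← integral_sub hIabar hIat]
      have e3 : (∫ s in Ioc (0:ℝ) T, (Abar s - At s))
          = ∫ s in Ioc (0:ℝ) T, Kset.indicator (fun s => Abar s - A0) s := by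
        apply setIntegral_congr_fun measurableSet_Ioc
        intro s _
        exact hsub s
      rw [e3, setIntegral_indicator hKc.measurableSet,
        inter_eq_self_of_subset_right hKIoc]
    have hKint : (∫ s in Kset, (Abar s - A0)) ≤ 0 := by
      rw [← hdiff]
      linarith
    have hKnonneg : 0 ≤ᵐ[volume.restrict Kset] fun s => Abar s - A0 := by
      rw [EventuallyLE, ae_restrict_iff' hKc.measurableSet]
      filter_upwards with s hs
      have : A0 < Abar s := ((hKsub hs).2).2
      simp only [Pi.zero_apply]
      linarith
    have hKintble : Integrable (fun s => Abar s - A0) (volume.restrict Kset) := by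
      haveI : IsFiniteMeasure (volume.restrict Kset) := by
        constructor
        rw [Measure.restrict_apply_univ]
        exact lt_of_le_of_lt (measure_mono hKIoc) measure_Ioc_lt_top
      apply Integrable.sub _ (integrable_const _)
      apply Integrable.mono' (integrable_const (-A0))
      · exact hAbarm.aestronglyMeasurable
      · filter_upwards with s
        rw [Real.norm_eq_abs, abs_le]
        have h := hAbarv s
        exact ⟨by linarith [h.1], by linarith [h.2, h.1]⟩
    have hKzero : (∫ s in Kset, (Abar s - A0)) = 0 :=
      le_antisymm hKint (setIntegral_nonneg hKc.measurableSet
        (fun s hs => by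
          have h2 : A0 < Abar s := ((hKsub hs).2).2
          linarith))
    have hae := (integral_eq_zero_iff_of_nonneg_ae hKnonneg hKintble).1 hKzero
    have hfalse : ∀ᵐ s ∂volume.restrict Kset, False := by
      have hmem := ae_restrict_mem (μ := volume) hKc.measurableSet
      filter_upwards [hae, hmem] with s hs0 hsK
      simp only [Pi.zero_apply] at hs0
      have h2 : A0 < Abar s := ((hKsub hsK).2).2
      linarith [sub_eq_zero.1 hs0]
    rw [eventually_false_iff_eq_bot, ae_eq_bot, Measure.restrict_eq_zero] at hfalse
    exact absurd hfalse (ne_of_gt hKpos)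
  -- conclude
  rw [ae_iff]
  rw [Measure.restrict_apply' measurableSet_Ioc]
  apply measure_mono_null _ hDnull
  intro t ht
  simp only [mem_inter_iff, mem_setOf_eq] at ht
  obtain ⟨hbad, htIoc⟩ := ht
  push_neg at hbad
  obtain ⟨hprem, hne⟩ := hbad
  rw [hD]
  refine ⟨htIoc, ?_, ?_⟩
  · simp only [mem_setOf_eq]
    have h1 := hw1 t htIoc.1
    have h2 := hw2 t htIoc.1
    rw [h1, h2] at hprem
    linarith
  · simp only [mem_setOf_eq]
    exact lt_of_le_of_ne (hAbarv t).1 (Ne.symm hne)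


theorem stmt4
    (T RL RR : ℝ) (hT : 0 < T) (hRL : 0 < RL) (hRR : 0 < RR)
    (HL HR : ℝ → ℝ)
    (hHLreg : ContDiffOn ℝ 2 HL (Icc (-RL) 0))
    (hHRreg : ContDiffOn ℝ 2 HR (Icc (-RR) 0))
    (hHLconv : ∃ m : ℝ, 0 < m ∧ StrongConvexOn (Icc (-RL) 0) m HL)
    (hHRconv : ∃ m : ℝ, 0 < m ∧ StrongConvexOn (Icc (-RR) 0) m HR)
    (hHLa : HL (-RL) = 0) (hHLb : HL 0 = 0)
    (hHRa : HR (-RR) = 0) (hHRb : HR 0 = 0)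
    (A0 : ℝ)
    (hA0 : A0 = max (sInf (HL '' Icc (-RL) 0)) (sInf (HR '' Icc (-RR) 0)))
    (hA0neg : A0 < 0)
    (u0 : ℝ → ℝ) (K : NNReal) (hu0 : LipschitzWith K u0)
    (hu0deriv : ∀ᵐ x : ℝ,
      (x < 0 → deriv u0 x ∈ Ioo (-RL) 0) ∧ (0 < x → deriv u0 x ∈ Ioo (-RR) 0))
    (LL LR : ℝ → ℝ) (hLL : LL = lagrangian RL HL) (hLR : LR = lagrangian RR HR)
    (ψ : ℝ → ℝ → ℝ → ℝ)
    (hψmeas : Measurable (fun q : ℝ × ℝ × ℝ => ψ q.1 q.2.1 q.2.2))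
    (hψbd : ∃ C : ℝ, ∀ x t ρ : ℝ, |ψ x t ρ| ≤ C)
    (hψsupp : ∃ Kc : Set (ℝ × ℝ × ℝ), IsCompact Kc ∧
      ∀ x t ρ : ℝ, (x, t, ρ) ∉ Kc → ψ x t ρ = 0)
    (hψcont : ∀ x t : ℝ, Continuous (fun ρ => ψ x t ρ))
    (f : ℝ → ℝ) (hf : MonotoneOn f (Icc A0 0))
    (J : (ℝ → ℝ) → ℝ)
    (hJ : ∀ A : ℝ → ℝ, J A =
      (∫ t in Ioc (0:ℝ) T, ∫ x : ℝ, ψ x t (deriv (fun y => valueFun LL LR u0 A y t) x))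
        + ∫ t in Ioc (0:ℝ) T, f (A t))
    (Abar : ℝ → ℝ) (hAbarAdm : Admissible A0 Abar)
    (hAbarMin : ∀ A : ℝ → ℝ, Admissible A0 A → J Abar ≤ J A)
    (hAbarMin2 : ∀ A : ℝ → ℝ,
      (Admissible A0 A ∧ ∀ B : ℝ → ℝ, Admissible A0 B → J A ≤ J B) →
      ∫ s in Ioc (0:ℝ) T, Abar s ≤ ∫ s in Ioc (0:ℝ) T, A s) :
    ∀ᵐ t ∂(volume.restrict (Ioc (0:ℝ) T)),
      valueFun LL LR u0 Abar 0 t = valueFun LL LR u0 (fun _ => A0) 0 t → Abar t = A0 := by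
  subst hLL
  subst hLR
  -- continuity of the Hamiltonians
  have hHLcont : ContinuousOn HL (Icc (-RL) 0) := hHLreg.continuousOn
  have hHRcont : ContinuousOn HR (Icc (-RR) 0) := hHRreg.continuousOn
  -- bounds
  obtain ⟨CL, hCL⟩ := isCompact_Icc.exists_bound_of_continuousOn hHLcont
  obtain ⟨CR, hCR⟩ := isCompact_Icc.exists_bound_of_continuousOn hHRcont
  set C0 : ℝ := max (max CL CR) 0 with hC0
  have hLag1 : LagHyp RL C0 (lagrangian RL HL) := by
    refine ⟨lagrangian_nonneg hRL hHLcont hHLb, lagrangian_ge hRL hHLcont hHLa, ?_,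
      lagrangian_continuous hRL hHLcont, hRL, le_max_right _ _⟩
    intro α
    apply lagrangian_le hRL hHLcont
    intro p hp
    have := hCL p hp
    rw [Real.norm_eq_abs] at this
    have h2 : -HL p ≤ |HL p| := neg_le_abs _
    calc -HL p ≤ CL := by linarith
    _ ≤ C0 := le_trans (le_max_left _ _) (le_max_left _ _)
  have hLag2 : LagHyp RR C0 (lagrangian RR HR) := by
    refine ⟨lagrangian_nonneg hRR hHRcont hHRb, lagrangian_ge hRR hHRcont hHRa, ?_,
      lagrangian_continuous hRR hHRcont, hRR, le_max_right _ _⟩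
    intro α
    apply lagrangian_le hRR hHRcont
    intro p hp
    have := hCR p hp
    rw [Real.norm_eq_abs] at this
    have h2 : -HR p ≤ |HR p| := neg_le_abs _
    calc -HR p ≤ CR := by linarith
    _ ≤ C0 := le_trans (le_max_right _ _) (le_max_left _ _)
  -- initial datum facts
  have hmono : Antitone u0 := by
    apply u0_antitone hu0
    filter_upwards [hu0deriv] with x hx hne
    rcases lt_trichotomy x 0 with h | h | h
    · exact (hx.1 h).2.le
    · exact absurd h hne
    · exact (hx.2 h).2.le
  have hdR : ∀ᵐ y : ℝ, 0 < y → -RR ≤ deriv u0 y := by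
    filter_upwards [hu0deriv] with x hx h
    exact (hx.2 h).1.le
  exact stmt4_aux hT hLag1 hLag2 hu0 hmono hdR hA0neg.le ψ f hf J hJ Abar hAbarAdm
    hAbarMin hAbarMin2
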